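/- If L₁ ⊆ Σ* is Parikh-recognizable and L₂ ⊆ Σ^ω is SPBA-recognizable, then the concatenation L₁L₂ ⊆ Σ^ω is SPBA-recognizable. -/

import Mathlib

/-- A linear subset of `ℕ^d`: all vectors `b₀ + z₁•b₁ + ... + z_ℓ•b_ℓ`. -/
def IsLinear {d : ℕ} (S : Set (Fin d → ℕ)) : Prop :=
  ∃ (b₀ : Fin d → ℕ) (ℓ : ℕ) (b : Fin ℓ → Fin d → ℕ),
    S = {v | ∃ z : Fin ℓ → ℕ, v = b₀ + ∑ i, z i • b i}

/-- A semi-linear subset of `ℕ^d`: a finite union of linear sets. -/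
def IsSemilinear {d : ℕ} (S : Set (Fin d → ℕ)) : Prop :=
  ∃ (n : ℕ) (T : Fin n → Set (Fin d → ℕ)), (∀ i, IsLinear (T i)) ∧ S = ⋃ i, T i

/-- The number of input-consuming steps among the first `i` steps. -/
def readCount (reads : ℕ → Bool) (i : ℕ) : ℕ :=
  ((Finset.range i).filter (fun j => reads j = true)).card

/-- A run of an ε-free vector-labeled automaton on the infinite word `α`:
`p` is the state sequence, `v i` the vector of the `i`-th transition. -/
def IsRun {Q Sig : Type} {d : ℕ} (q0 : Q) (Δ : Set (Q × Sig × (Fin d → ℕ) × Q))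
    (α : ℕ → Sig) (p : ℕ → Q) (v : ℕ → Fin d → ℕ) : Prop :=
  p 0 = q0 ∧ ∀ i, (p i, α i, v i, p (i + 1)) ∈ Δ

/-- A run of an automaton with ε-transitions `E` on the infinite word `α`;
`reads i = true` iff the `i`-th transition consumes an input symbol, and
infinitely many transitions must consume a symbol. -/
def IsEpsRun {Q Sig : Type} {d : ℕ} (q0 : Q) (Δ : Set (Q × Sig × (Fin d → ℕ) × Q))
    (E : Set (Q × (Fin d → ℕ) × Q)) (α : ℕ → Sig) (p : ℕ → Q) (v : ℕ → Fin d → ℕ)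
    (reads : ℕ → Bool) : Prop :=
  p 0 = q0 ∧ (∀ N, ∃ i, N ≤ i ∧ reads i = true) ∧
    ∀ i, if reads i then (p i, α (readCount reads i), v i, p (i + 1)) ∈ Δ
      else (p i, v i, p (i + 1)) ∈ E

/-- Prefix-acceptance: infinitely many positions `n ≥ 1` where the current state is
accepting and the accumulated vector sum lies in the (state-dependent) semi-linear set. -/
def PrefixCond {Q : Type} {d : ℕ} (F : Set Q) (C : Q → Set (Fin d → ℕ))
    (p : ℕ → Q) (v : ℕ → Fin d → ℕ) : Prop :=
  ∀ N, ∃ n, N ≤ n ∧ 1 ≤ n ∧ p n ∈ F ∧ (∑ j ∈ Finset.range n, v j) ∈ C (p n)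

/-- Weak reset-acceptance: there are infinitely many reset positions `0 = k 0 < k 1 < ...`
such that each `p (k (i+1))` is accepting and the vector sum between consecutive
reset positions lies in the corresponding semi-linear set. -/
def WeakCond {Q : Type} {d : ℕ} (F : Set Q) (C : Q → Set (Fin d → ℕ))
    (p : ℕ → Q) (v : ℕ → Fin d → ℕ) : Prop :=
  ∃ k : ℕ → ℕ, k 0 = 0 ∧ StrictMono k ∧
    ∀ i, p (k (i + 1)) ∈ F ∧
      (∑ j ∈ Finset.Ico (k i) (k (i + 1)), v j) ∈ C (p (k (i + 1)))

/-- Strong reset-acceptance: `k 1 < k 2 < ...` enumerates *all* positions `n ≥ 1` of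
accepting states (so there are infinitely many), and the vector sum between any two
consecutive such positions (with `k 0 = 0`) lies in the corresponding semi-linear set. -/
def StrongCond {Q : Type} {d : ℕ} (F : Set Q) (C : Q → Set (Fin d → ℕ))
    (p : ℕ → Q) (v : ℕ → Fin d → ℕ) : Prop :=
  ∃ k : ℕ → ℕ, k 0 = 0 ∧ StrictMono k ∧
    (∀ n, 1 ≤ n → (p n ∈ F ↔ ∃ i, 1 ≤ i ∧ k i = n)) ∧
    ∀ i, (∑ j ∈ Finset.Ico (k i) (k (i + 1)), v j) ∈ C (p (k (i + 1)))

/-- A Parikh(-Büchi) automaton of dimension `d` (also used as a Parikh automaton on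
finite words): finitely many states, vector-labeled transitions, a semi-linear set `C`. -/
structure PBA (Sig : Type) (d : ℕ) where
  Q : Type
  fin : Fintype Q
  q0 : Q
  Δ : Set (Q × Sig × (Fin d → ℕ) × Q)
  F : Set Q
  C : Set (Fin d → ℕ)

attribute [instance] PBA.fin

/-- `P_ω(A)`: the ω-language recognized under prefix-acceptance (PPBA). -/
def PBA.PrefixLang {Sig d} (A : PBA Sig d) : Set (ℕ → Sig) :=
  {α | ∃ p v, IsRun A.q0 A.Δ α p v ∧ PrefixCond A.F (fun _ => A.C) p v}

/-- `W_ω(A)`: the ω-language recognized under weak reset-acceptance (WPBA). -/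
def PBA.WeakLang {Sig d} (A : PBA Sig d) : Set (ℕ → Sig) :=
  {α | ∃ p v, IsRun A.q0 A.Δ α p v ∧ WeakCond A.F (fun _ => A.C) p v}

/-- `S_ω(A)`: the ω-language recognized under strong reset-acceptance (SPBA). -/
def PBA.StrongLang {Sig d} (A : PBA Sig d) : Set (ℕ → Sig) :=
  {α | ∃ p v, IsRun A.q0 A.Δ α p v ∧ StrongCond A.F (fun _ => A.C) p v}

/-- Acceptance of a finite word by a Parikh automaton. -/
def PBA.FinAccepts {Sig d} (A : PBA Sig d) (w : List Sig) : Prop :=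
  ∃ (p : ℕ → A.Q) (v : ℕ → Fin d → ℕ),
    p 0 = A.q0 ∧ (∀ i : Fin w.length, (p i, w.get i, v i, p (i + 1)) ∈ A.Δ) ∧
    p w.length ∈ A.F ∧ (∑ j ∈ Finset.range w.length, v j) ∈ A.C

/-- `L(A)`: the language of finite words recognized by a Parikh automaton. -/
def PBA.FinLang {Sig d} (A : PBA Sig d) : Set (List Sig) := {w | A.FinAccepts w}

/-- A Parikh-Büchi automaton with ε-transitions. -/
structure EpsPBA (Sig : Type) (d : ℕ) where
  Q : Type
  fin : Fintype Q
  q0 : Q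
  Δ : Set (Q × Sig × (Fin d → ℕ) × Q)
  E : Set (Q × (Fin d → ℕ) × Q)
  F : Set Q
  C : Set (Fin d → ℕ)

attribute [instance] EpsPBA.fin

def EpsPBA.PrefixLang {Sig d} (A : EpsPBA Sig d) : Set (ℕ → Sig) :=
  {α | ∃ p v reads, IsEpsRun A.q0 A.Δ A.E α p v reads ∧ PrefixCond A.F (fun _ => A.C) p v}

def EpsPBA.WeakLang {Sig d} (A : EpsPBA Sig d) : Set (ℕ → Sig) :=
  {α | ∃ p v reads, IsEpsRun A.q0 A.Δ A.E α p v reads ∧ WeakCond A.F (fun _ => A.C) p v}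

def EpsPBA.StrongLang {Sig d} (A : EpsPBA Sig d) : Set (ℕ → Sig) :=
  {α | ∃ p v reads, IsEpsRun A.q0 A.Δ A.E α p v reads ∧ StrongCond A.F (fun _ => A.C) p v}

/-- A Multi-PBA: every (accepting) state carries its own semi-linear set. -/
structure MPBA (Sig : Type) (d : ℕ) where
  Q : Type
  fin : Fintype Q
  q0 : Q
  Δ : Set (Q × Sig × (Fin d → ℕ) × Q)
  F : Set Q
  C : Q → Set (Fin d → ℕ)

attribute [instance] MPBA.fin

def MPBA.PrefixLang {Sig d} (A : MPBA Sig d) : Set (ℕ → Sig) :=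
  {α | ∃ p v, IsRun A.q0 A.Δ α p v ∧ PrefixCond A.F A.C p v}

/-- A Multi-PBA with ε-transitions. -/
structure EpsMPBA (Sig : Type) (d : ℕ) where
  Q : Type
  fin : Fintype Q
  q0 : Q
  Δ : Set (Q × Sig × (Fin d → ℕ) × Q)
  E : Set (Q × (Fin d → ℕ) × Q)
  F : Set Q
  C : Q → Set (Fin d → ℕ)

attribute [instance] EpsMPBA.fin

def EpsMPBA.StrongLang {Sig d} (A : EpsMPBA Sig d) : Set (ℕ → Sig) :=
  {α | ∃ p v reads, IsEpsRun A.q0 A.Δ A.E α p v reads ∧ StrongCond A.F A.C p v}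

/-- A language of finite words is Parikh-recognizable. -/
def ParikhRec {Sig : Type} (L : Set (List Sig)) : Prop :=
  ∃ d, ∃ A : PBA Sig d, IsSemilinear A.C ∧ A.FinLang = L

/-- An ω-language is PPBA-recognizable. -/
def PPBARec {Sig : Type} (L : Set (ℕ → Sig)) : Prop :=
  ∃ d, ∃ A : PBA Sig d, IsSemilinear A.C ∧ A.PrefixLang = L

/-- An ω-language is SPBA-recognizable. -/
def SPBARec {Sig : Type} (L : Set (ℕ → Sig)) : Prop :=
  ∃ d, ∃ A : PBA Sig d, IsSemilinear A.C ∧ A.StrongLang = L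

/-- Concatenation of a language of finite words with an ω-language. -/
def CatLang {Sig : Type} (L₁ : Set (List Sig)) (L₂ : Set (ℕ → Sig)) : Set (ℕ → Sig) :=
  {α | ∃ u ∈ L₁, ∃ β ∈ L₂,
    (∀ i : Fin u.length, α i = u.get i) ∧ ∀ n, β n = α (u.length + n)}

/-- `α` is the concatenation `w 0 ++ w 1 ++ w 2 ++ ⋯` of the finite words `w i`. -/
def IsOmegaConcat {Sig : Type} (w : ℕ → List Sig) (α : ℕ → Sig) : Prop :=
  ∀ n : ℕ, ∀ i : Fin (((List.range n).map w).flatten.length),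
    ((List.range n).map w).flatten.get i = α i

/-- The ω-power `L^ω = {w₁w₂w₃⋯ ∣ w_i ∈ L ∖ {ε}}`. -/
def OmegaPower {Sig : Type} (L : Set (List Sig)) : Set (ℕ → Sig) :=
  {α | ∃ w : ℕ → List Sig, (∀ i, w i ∈ L) ∧ (∀ i, w i ≠ []) ∧ IsOmegaConcat w α}

/-- Kleene star of a set of finite words. -/
def ListStar {Sig : Type} (L : Set (List Sig)) : Set (List Sig) :=
  {w | ∃ ws : List (List Sig), (∀ u ∈ ws, u ∈ L) ∧ w = ws.flatten}

/-- A (nondeterministic) Büchi automaton. -/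
structure BuchiNFA (Sig : Type) where
  Q : Type
  fin : Fintype Q
  q0 : Q
  Δ : Set (Q × Sig × Q)
  F : Set Q

attribute [instance] BuchiNFA.fin

def BuchiNFA.Lang {Sig} (B : BuchiNFA Sig) : Set (ℕ → Sig) :=
  {α | ∃ p : ℕ → B.Q, p 0 = B.q0 ∧ (∀ i, (p i, α i, p (i + 1)) ∈ B.Δ) ∧
    ∀ N, ∃ n, N ≤ n ∧ p n ∈ B.F}

/-- An ω-language is ω-regular if it is recognized by a Büchi automaton. -/
def OmegaRegular {Sig : Type} (R : Set (ℕ → Sig)) : Prop := ∃ B : BuchiNFA Sig, B.Lang = R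

/-- A blind `k`-counter machine: transitions are labeled by a letter or ε (`Option Sig`)
and an integer vector. -/
structure CM (Sig : Type) (k : ℕ) where
  Q : Type
  fin : Fintype Q
  q0 : Q
  Δ : Set (Q × Option Sig × (Fin k → ℤ) × Q)
  F : Set Q

attribute [instance] CM.fin

/-- The ω-language of a blind counter machine: some run reads every symbol of `α`
and is infinitely often in an accepting state with all counters equal to `0`. -/
def CM.Lang {Sig k} (M : CM Sig k) : Set (ℕ → Sig) :=
  {α | ∃ (p : ℕ → M.Q) (v : ℕ → Fin k → ℤ) (reads : ℕ → Bool),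
    p 0 = M.q0 ∧ (∀ N, ∃ i, N ≤ i ∧ reads i = true) ∧
    (∀ i, if reads i then (p i, some (α (readCount reads i)), v i, p (i + 1)) ∈ M.Δ
      else (p i, (none : Option Sig), v i, p (i + 1)) ∈ M.Δ) ∧
    ∀ N, ∃ n, N ≤ n ∧ p n ∈ M.F ∧ (∑ j ∈ Finset.range n, v j) = 0}

namespace SPBAc

def pL (a b : ℕ) (v : Fin (a+b) → ℕ) : Fin a → ℕ := fun i => v (Fin.castAdd b i)
def pR (a b : ℕ) (v : Fin (a+b) → ℕ) : Fin b → ℕ := fun i => v (Fin.natAdd a i)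

variable {a b : ℕ}

lemma pL_append (x : Fin a → ℕ) (y : Fin b → ℕ) : pL a b (Fin.append x y) = x :=
  funext fun i => Fin.append_left x y i

lemma pR_append (x : Fin a → ℕ) (y : Fin b → ℕ) : pR a b (Fin.append x y) = y :=
  funext fun i => Fin.append_right x y i

lemma pL_sum {ι} (s : Finset ι) (f : ι → Fin (a+b) → ℕ) :
    pL a b (∑ j ∈ s, f j) = ∑ j ∈ s, pL a b (f j) := by
  funext i; simp [pL, Finset.sum_apply]

lemma pR_sum {ι} (s : Finset ι) (f : ι → Fin (a+b) → ℕ) :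
    pR a b (∑ j ∈ s, f j) = ∑ j ∈ s, pR a b (f j) := by
  funext i; simp [pR, Finset.sum_apply]

lemma pL_add (u v : Fin (a+b) → ℕ) : pL a b (u + v) = pL a b u + pL a b v := rfl
lemma pR_add (u v : Fin (a+b) → ℕ) : pR a b (u + v) = pR a b u + pR a b v := rfl
lemma pL_smul (z : ℕ) (u : Fin (a+b) → ℕ) : pL a b (z • u) = z • pL a b u := rfl
lemma pR_smul (z : ℕ) (u : Fin (a+b) → ℕ) : pR a b (z • u) = z • pR a b u := rfl

lemma ext_proj {u v : Fin (a+b) → ℕ} (h1 : pL a b u = pL a b v) (h2 : pR a b u = pR a b v) :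
    u = v := by
  funext i
  refine Fin.addCases (motive := fun i => u i = v i) (fun j => congrFun h1 j)
    (fun j => congrFun h2 j) i

/-- Product of two sets of vectors, via concatenation of coordinates. -/
def prodSet (S : Set (Fin a → ℕ)) (T : Set (Fin b → ℕ)) : Set (Fin (a+b) → ℕ) :=
  {v | pL a b v ∈ S ∧ pR a b v ∈ T}

lemma isLinear_prod {S : Set (Fin a → ℕ)} {T : Set (Fin b → ℕ)}
    (hS : IsLinear S) (hT : IsLinear T) : IsLinear (prodSet S T) := by
  obtain ⟨b₀, ℓ₁, bb, rfl⟩ := hS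
  obtain ⟨c₀, ℓ₂, cc, rfl⟩ := hT
  refine ⟨Fin.append b₀ c₀, ℓ₁ + ℓ₂,
    Fin.append (fun i => Fin.append (bb i) 0) (fun j => Fin.append 0 (cc j)), ?_⟩
  have keyL : ∀ z' : Fin (ℓ₁ + ℓ₂) → ℕ,
      pL a b (Fin.append b₀ c₀ + ∑ i, z' i • (Fin.append (fun i => Fin.append (bb i) 0)
        (fun j => Fin.append 0 (cc j)) i)) = b₀ + ∑ i, z' (Fin.castAdd ℓ₂ i) • bb i := by
    intro z'
    rw [pL_add, pL_sum, pL_append]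
    congr 1
    rw [Fin.sum_univ_add]
    have h1 : ∀ i : Fin ℓ₁, pL a b (z' (Fin.castAdd ℓ₂ i) •
        (Fin.append (fun i => Fin.append (bb i) 0) (fun j => Fin.append 0 (cc j))
          (Fin.castAdd ℓ₂ i))) = z' (Fin.castAdd ℓ₂ i) • bb i := by
      intro i; rw [Fin.append_left, pL_smul, pL_append]
    have h2 : ∀ j : Fin ℓ₂, pL a b (z' (Fin.natAdd ℓ₁ j) •
        (Fin.append (fun i => Fin.append (bb i) 0) (fun j => Fin.append 0 (cc j))
          (Fin.natAdd ℓ₁ j))) = 0 := by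
      intro j; rw [Fin.append_right, pL_smul, pL_append]; simp
    simp only [h1, h2]
    simp
  have keyR : ∀ z' : Fin (ℓ₁ + ℓ₂) → ℕ,
      pR a b (Fin.append b₀ c₀ + ∑ i, z' i • (Fin.append (fun i => Fin.append (bb i) 0)
        (fun j => Fin.append 0 (cc j)) i)) = c₀ + ∑ j, z' (Fin.natAdd ℓ₁ j) • cc j := by
    intro z'
    rw [pR_add, pR_sum, pR_append]
    congr 1
    rw [Fin.sum_univ_add]
    have h1 : ∀ i : Fin ℓ₁, pR a b (z' (Fin.castAdd ℓ₂ i) •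
        (Fin.append (fun i => Fin.append (bb i) 0) (fun j => Fin.append 0 (cc j))
          (Fin.castAdd ℓ₂ i))) = 0 := by
      intro i; rw [Fin.append_left, pR_smul, pR_append]; simp
    have h2 : ∀ j : Fin ℓ₂, pR a b (z' (Fin.natAdd ℓ₁ j) •
        (Fin.append (fun i => Fin.append (bb i) 0) (fun j => Fin.append 0 (cc j))
          (Fin.natAdd ℓ₁ j))) = z' (Fin.natAdd ℓ₁ j) • cc j := by
      intro j; rw [Fin.append_right, pR_smul, pR_append]
    simp only [h1, h2]
    simp
  ext v
  constructor
  · rintro ⟨⟨z, hz⟩, ⟨w, hw⟩⟩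
    refine ⟨Fin.append z w, ext_proj ?_ ?_⟩
    · rw [keyL]
      simp only [Fin.append_left]
      exact hz
    · rw [keyR]
      simp only [Fin.append_right]
      exact hw
  · rintro ⟨z', rfl⟩
    exact ⟨⟨fun i => z' (Fin.castAdd ℓ₂ i), by simpa using keyL z'⟩,
      ⟨fun j => z' (Fin.natAdd ℓ₁ j), by simpa using keyR z'⟩⟩

lemma isSemilinear_of_fintype {d : ℕ} {ι : Type} [Fintype ι] (T : ι → Set (Fin d → ℕ))
    (h : ∀ i, IsLinear (T i)) : IsSemilinear (⋃ i, T i) := by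
  let e := Fintype.equivFin ι
  refine ⟨Fintype.card ι, fun j => T (e.symm j), fun j => h _, ?_⟩
  ext v
  simp only [Set.mem_iUnion]
  exact ⟨fun ⟨i, hi⟩ => ⟨e i, by simpa using hi⟩, fun ⟨j, hj⟩ => ⟨e.symm j, hj⟩⟩

lemma isSemilinear_union {d : ℕ} {S T : Set (Fin d → ℕ)}
    (hS : IsSemilinear S) (hT : IsSemilinear T) : IsSemilinear (S ∪ T) := by
  obtain ⟨n, U, hU, rfl⟩ := hS
  obtain ⟨m, W, hW, rfl⟩ := hT
  have : (⋃ i, U i) ∪ (⋃ i, W i) = ⋃ x : Fin n ⊕ Fin m, Sum.elim U W x := by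
    rw [Set.iUnion_sum]; rfl
  rw [this]
  exact isSemilinear_of_fintype _ (by rintro (i | j); exacts [hU i, hW j])

lemma isSemilinear_prod {S : Set (Fin a → ℕ)} {T : Set (Fin b → ℕ)}
    (hS : IsSemilinear S) (hT : IsSemilinear T) : IsSemilinear (prodSet S T) := by
  obtain ⟨n, U, hU, rfl⟩ := hS
  obtain ⟨m, W, hW, rfl⟩ := hT
  have : prodSet (⋃ i, U i) (⋃ j, W j) = ⋃ x : Fin n × Fin m, prodSet (U x.1) (W x.2) := by
    ext v
    simp only [prodSet, Set.mem_iUnion, Set.mem_setOf_eq, Prod.exists]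
    tauto
  rw [this]
  exact isSemilinear_of_fintype _ fun x => isLinear_prod (hU x.1) (hW x.2)

lemma isLinear_singleton {d : ℕ} (c : Fin d → ℕ) : IsLinear ({c} : Set (Fin d → ℕ)) := by
  refine ⟨c, 0, Fin.elim0, ?_⟩
  ext v
  simp [eq_comm]

lemma isSemilinear_singleton {d : ℕ} (c : Fin d → ℕ) :
    IsSemilinear ({c} : Set (Fin d → ℕ)) := by
  have : ({c} : Set (Fin d → ℕ)) = ⋃ _ : Fin 1, {c} := by simp
  rw [this]
  exact isSemilinear_of_fintype _ fun _ => isLinear_singleton c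

end SPBAc

namespace SPBAc

variable {d₁ d₂ : ℕ}

def glue3 (d₁ d₂ : ℕ) (x : Fin d₁ → ℕ) (y : Fin d₂ → ℕ) (c : ℕ) : Fin (d₁+d₂+1) → ℕ :=
  Fin.append (Fin.append x y) (fun _ => c)

def pr1 (d₁ d₂ : ℕ) (v : Fin (d₁+d₂+1) → ℕ) : Fin d₁ → ℕ := pL d₁ d₂ (pL (d₁+d₂) 1 v)
def pr2 (d₁ d₂ : ℕ) (v : Fin (d₁+d₂+1) → ℕ) : Fin d₂ → ℕ := pR d₁ d₂ (pL (d₁+d₂) 1 v)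
def prc (d₁ d₂ : ℕ) (v : Fin (d₁+d₂+1) → ℕ) : ℕ := v (Fin.natAdd (d₁+d₂) 0)

lemma pr1_glue3 (x : Fin d₁ → ℕ) (y : Fin d₂ → ℕ) (c : ℕ) :
    pr1 d₁ d₂ (glue3 d₁ d₂ x y c) = x := by
  rw [pr1, glue3, pL_append, pL_append]

lemma pr2_glue3 (x : Fin d₁ → ℕ) (y : Fin d₂ → ℕ) (c : ℕ) :
    pr2 d₁ d₂ (glue3 d₁ d₂ x y c) = y := by
  rw [pr2, glue3, pL_append, pR_append]

lemma prc_glue3 (x : Fin d₁ → ℕ) (y : Fin d₂ → ℕ) (c : ℕ) :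
    prc d₁ d₂ (glue3 d₁ d₂ x y c) = c := by
  show Fin.append (Fin.append x y) (fun _ => c) (Fin.natAdd (d₁+d₂) 0) = c
  rw [Fin.append_right]

lemma pr1_sum {ι} (s : Finset ι) (f : ι → Fin (d₁+d₂+1) → ℕ) :
    pr1 d₁ d₂ (∑ j ∈ s, f j) = ∑ j ∈ s, pr1 d₁ d₂ (f j) := by
  rw [pr1, pL_sum, pL_sum]; rfl

lemma pr2_sum {ι} (s : Finset ι) (f : ι → Fin (d₁+d₂+1) → ℕ) :
    pr2 d₁ d₂ (∑ j ∈ s, f j) = ∑ j ∈ s, pr2 d₁ d₂ (f j) := by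
  rw [pr2, pL_sum, pR_sum]; rfl

lemma prc_sum {ι} (s : Finset ι) (f : ι → Fin (d₁+d₂+1) → ℕ) :
    prc d₁ d₂ (∑ j ∈ s, f j) = ∑ j ∈ s, prc d₁ d₂ (f j) := by
  simp [prc, Finset.sum_apply]

lemma pR_one_eq (v : Fin (d₁+d₂+1) → ℕ) (c : ℕ) :
    pR (d₁+d₂) 1 v = (fun _ => c) ↔ prc d₁ d₂ v = c := by
  constructor
  · intro h; exact congrFun h 0
  · intro h; funext i; rw [Subsingleton.elim i 0]; exact h

/-- The combined `C`-set for concatenation. -/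
def catC (d₁ d₂ : ℕ) (C₁ : Set (Fin d₁ → ℕ)) (C₂ : Set (Fin d₂ → ℕ)) :
    Set (Fin (d₁+d₂+1) → ℕ) :=
  {v | (pr1 d₁ d₂ v ∈ C₁ ∧ pr2 d₁ d₂ v ∈ C₂ ∧ prc d₁ d₂ v = 1)
    ∨ (pr1 d₁ d₂ v = 0 ∧ pr2 d₁ d₂ v ∈ C₂ ∧ prc d₁ d₂ v = 0)}

lemma isSemilinear_catC {C₁ : Set (Fin d₁ → ℕ)} {C₂ : Set (Fin d₂ → ℕ)}
    (h₁ : IsSemilinear C₁) (h₂ : IsSemilinear C₂) : IsSemilinear (catC d₁ d₂ C₁ C₂) := by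
  have heq : catC d₁ d₂ C₁ C₂ =
      (prodSet (prodSet C₁ C₂) {fun _ => 1} ∪ prodSet (prodSet ({0} : Set (Fin d₁ → ℕ)) C₂) {fun _ => 0}) := by
    ext v
    simp only [catC, prodSet, Set.mem_setOf_eq, Set.mem_union, Set.mem_singleton_iff,
      pR_one_eq, pr1, pr2]
    tauto
  rw [heq]
  exact isSemilinear_union
    (isSemilinear_prod (isSemilinear_prod h₁ h₂) (isSemilinear_singleton _))
    (isSemilinear_prod (isSemilinear_prod (isSemilinear_singleton _) h₂)
      (isSemilinear_singleton _))

/-- The concatenation automaton. -/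
def catPBA {Sig : Type} {d₁ d₂ : ℕ} (A₁ : PBA Sig d₁) (A₂ : PBA Sig d₂) :
    PBA Sig (d₁+d₂+1) where
  Q := A₁.Q ⊕ A₂.Q
  fin := inferInstance
  q0 := Sum.inl A₁.q0
  Δ := {t | (∃ q aa v q', (q, aa, v, q') ∈ A₁.Δ ∧
              t = (Sum.inl q, aa, glue3 d₁ d₂ v 0 0, Sum.inl q'))
        ∨ (∃ q aa v q', q ∈ A₁.F ∧ (A₂.q0, aa, v, q') ∈ A₂.Δ ∧
              t = (Sum.inl q, aa, glue3 d₁ d₂ 0 v 1, Sum.inr q'))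
        ∨ (∃ q aa v q', (q, aa, v, q') ∈ A₂.Δ ∧
              t = (Sum.inr q, aa, glue3 d₁ d₂ 0 v 0, Sum.inr q'))}
  F := Sum.inr '' A₂.F
  C := catC d₁ d₂ A₁.C A₂.C

end SPBAc

namespace SPBAc

lemma cat_subset {Sig : Type} {d₁ d₂ : ℕ} (A₁ : PBA Sig d₁) (A₂ : PBA Sig d₂) (α : ℕ → Sig)
    (h : α ∈ CatLang A₁.FinLang A₂.StrongLang) : α ∈ (catPBA A₁ A₂).StrongLang := by
  obtain ⟨u, hu, β, hβ, hα1, hα2⟩ := h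
  obtain ⟨p₁, v₁, hp10, hp1Δ, hp1F, hp1C⟩ := hu
  obtain ⟨p₂, v₂, ⟨hp20, hp2Δ⟩, K2, hK20, hK2mono, hK2F, hK2C⟩ := hβ
  set m := u.length with hm
  set P : ℕ → (catPBA A₁ A₂).Q :=
    fun n => if n ≤ m then Sum.inl (p₁ n) else Sum.inr (p₂ (n - m)) with hP
  set V : ℕ → Fin (d₁+d₂+1) → ℕ :=
    fun n => if n < m then glue3 d₁ d₂ (v₁ n) 0 0
      else if n = m then glue3 d₁ d₂ 0 (v₂ 0) 1 else glue3 d₁ d₂ 0 (v₂ (n - m)) 0 with hV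
  have hPle : ∀ n, n ≤ m → P n = Sum.inl (p₁ n) := fun n hn => by simp [hP, hn]; rfl
  have hPgt : ∀ n, m < n → P n = Sum.inr (p₂ (n - m)) := fun n hn => by
    simp [hP, Nat.not_le.mpr hn]; rfl
  have hVlt : ∀ n, n < m → V n = glue3 d₁ d₂ (v₁ n) 0 0 := fun n hn => by simp [hV, hn]
  have hVeq : V m = glue3 d₁ d₂ 0 (v₂ 0) 1 := by simp [hV]
  have hVgt : ∀ n, m < n → V n = glue3 d₁ d₂ 0 (v₂ (n - m)) 0 := fun n hn => by
    simp [hV, Nat.not_lt.mpr hn.le, Nat.ne_of_gt hn]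
  have hK2pos : ∀ i, 1 ≤ i → 1 ≤ K2 i := by
    intro i hi
    have := hK2mono (Nat.lt_of_lt_of_le Nat.zero_lt_one hi)
    omega
  refine ⟨P, V, ⟨hPle 0 (Nat.zero_le m) ▸ by rw [hp10]; rfl, ?_⟩, ?_⟩
  · -- transitions
    intro n
    rcases lt_trichotomy n m with hn | hn | hn
    · refine Or.inl ⟨p₁ n, α n, v₁ n, p₁ (n + 1), ?_, ?_⟩
      · have h1 := hp1Δ ⟨n, hn⟩
        have h2 := hα1 ⟨n, hn⟩
        simpa [h2] using h1
      · rw [hPle n hn.le, hPle (n+1) hn, hVlt n hn]; rfl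
    · subst hn
      refine Or.inr (Or.inl ⟨p₁ m, α m, v₂ 0, p₂ 1, hp1F, ?_, ?_⟩)
      · have h1 := hp2Δ 0
        rw [hp20] at h1
        have h2 := hα2 0
        rw [Nat.add_zero] at h2
        rw [h2] at h1
        simpa using h1
      · rw [hPle m le_rfl, hVeq, hPgt (m+1) (Nat.lt_succ_self m), Nat.add_sub_cancel_left]; rfl
    · refine Or.inr (Or.inr ⟨p₂ (n - m), α n, v₂ (n - m), p₂ (n - m + 1), ?_, ?_⟩)
      · have h1 := hp2Δ (n - m)
        have h2 := hα2 (n - m)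
        rw [Nat.add_sub_cancel' hn.le] at h2
        rwa [h2] at h1
      · rw [hPgt n hn, hVgt n hn, hPgt (n+1) (Nat.lt_succ_of_lt hn),
          Nat.sub_add_comm hn.le]; rfl
  · -- StrongCond
    set kk : ℕ → ℕ := fun i => if i = 0 then 0 else m + K2 i with hkk
    have hk0 : kk 0 = 0 := rfl
    have hks : ∀ i : ℕ, kk (i+1) = m + K2 (i+1) := fun i => by simp [hkk]
    refine ⟨kk, hk0, ?_, ?_, ?_⟩
    · apply strictMono_nat_of_lt_succ
      intro i
      cases i with
      | zero =>
        rw [hk0, hks 0]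
        have := hK2pos (0+1) (by omega)
        omega
      | succ j =>
        rw [hks j, hks (j+1)]
        have := hK2mono (show j+1 < j+1+1 by omega)
        omega
    · intro n hn
      rcases le_or_gt n m with hnm | hnm
      · constructor
        · intro hF
          exfalso
          rw [hPle n hnm] at hF
          obtain ⟨q, _, hq⟩ := hF
          cases hq
        · rintro ⟨i, hi1, hi2⟩
          obtain ⟨j, rfl⟩ := Nat.exists_eq_add_of_le' hi1
          rw [hks j] at hi2
          have := hK2pos (j+1) (by omega)
          omega
      · rw [hPgt n hnm]
        have hchar := hK2F (n - m) (by omega)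
        constructor
        · intro hF
          have hmem : p₂ (n - m) ∈ A₂.F := by
            obtain ⟨q, hqF, hq⟩ := hF
            rwa [← Sum.inr_injective hq]
          obtain ⟨i, hi1, hi2⟩ := hchar.mp hmem
          obtain ⟨j, rfl⟩ := Nat.exists_eq_add_of_le' hi1
          refine ⟨j + 1, by omega, ?_⟩
          rw [hks j]
          omega
        · rintro ⟨i, hi1, hi2⟩
          obtain ⟨j, rfl⟩ := Nat.exists_eq_add_of_le' hi1
          rw [hks j] at hi2
          refine ⟨p₂ (n - m), hchar.mpr ⟨j + 1, by omega, by omega⟩, rfl⟩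
    · intro i
      cases i with
      | zero =>
        -- segment [0, m + K2 1)
        rw [hk0, hks 0]
        have hmlt : m < m + K2 (0+1) := by have := hK2pos (0+1) (by omega); omega
        refine Or.inl ⟨?_, ?_, ?_⟩
        · rw [pr1_sum]
          have hsplit : ∑ j ∈ Finset.Ico 0 (m + K2 (0+1)), pr1 d₁ d₂ (V j)
              = ∑ j ∈ Finset.Ico 0 m, pr1 d₁ d₂ (V j)
                + ∑ j ∈ Finset.Ico m (m + K2 (0+1)), pr1 d₁ d₂ (V j) :=
            (Finset.sum_Ico_consecutive _ (Nat.zero_le m) (Nat.le_add_right m _)).symm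
          rw [hsplit]
          have h2 : ∑ j ∈ Finset.Ico m (m + K2 (0+1)), pr1 d₁ d₂ (V j) = 0 := by
            apply Finset.sum_eq_zero
            intro j hj
            rw [Finset.mem_Ico] at hj
            rcases Nat.eq_or_lt_of_le hj.1 with he | hl
            · rw [← he, hVeq, pr1_glue3]
            · rw [hVgt j hl, pr1_glue3]
          rw [h2, add_zero]
          have h1 : ∑ j ∈ Finset.Ico 0 m, pr1 d₁ d₂ (V j) = ∑ j ∈ Finset.range m, v₁ j := by
            rw [← Finset.range_eq_Ico]
            apply Finset.sum_congr rfl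
            intro j hj
            rw [Finset.mem_range] at hj
            rw [hVlt j hj, pr1_glue3]
          rw [h1]; exact hp1C
        · rw [pr2_sum]
          have hsplit : ∑ j ∈ Finset.Ico 0 (m + K2 (0+1)), pr2 d₁ d₂ (V j)
              = ∑ j ∈ Finset.Ico 0 m, pr2 d₁ d₂ (V j)
                + ∑ j ∈ Finset.Ico m (m + K2 (0+1)), pr2 d₁ d₂ (V j) :=
            (Finset.sum_Ico_consecutive _ (Nat.zero_le m) (Nat.le_add_right m _)).symm
          rw [hsplit]
          have h1 : ∑ j ∈ Finset.Ico 0 m, pr2 d₁ d₂ (V j) = 0 := by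
            apply Finset.sum_eq_zero
            intro j hj
            rw [Finset.mem_Ico] at hj
            rw [hVlt j hj.2, pr2_glue3]
          rw [h1, zero_add]
          have h2 : ∑ j ∈ Finset.Ico m (m + K2 (0+1)), pr2 d₁ d₂ (V j)
              = ∑ j ∈ Finset.range (K2 (0+1)), v₂ j := by
            rw [Finset.sum_Ico_eq_sum_range, Nat.add_sub_cancel_left]
            apply Finset.sum_congr rfl
            intro j hj
            rw [Finset.mem_range] at hj
            cases Nat.eq_zero_or_pos j with
            | inl h0 =>
              subst h0
              rw [Nat.add_zero, hVeq, pr2_glue3]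
            | inr hpos =>
              rw [hVgt (m + j) (by omega), pr2_glue3, Nat.add_sub_cancel_left]
          rw [h2]
          have hc := hK2C 0
          rw [hK20] at hc
          rw [Finset.range_eq_Ico]
          exact hc
        · rw [prc_sum]
          have hterm : ∀ j ∈ Finset.Ico 0 (m + K2 (0+1)), prc d₁ d₂ (V j)
              = if j = m then 1 else 0 := by
            intro j _
            rcases lt_trichotomy j m with hj | hj | hj
            · rw [hVlt j hj, prc_glue3, if_neg (Nat.ne_of_lt hj)]
            · rw [hj, hVeq, prc_glue3, if_pos rfl]
            · rw [hVgt j hj, prc_glue3, if_neg (Nat.ne_of_gt hj)]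
          rw [Finset.sum_congr rfl hterm, Finset.sum_ite_eq' _ m (fun _ => 1),
            if_pos (Finset.mem_Ico.mpr ⟨Nat.zero_le m, hmlt⟩)]
      | succ i =>
        rw [hks i, hks (i+1)]
        have hge : ∀ j, m + K2 (i+1) ≤ j → m < j := by
          intro j hj
          have := hK2pos (i+1) (by omega)
          omega
        refine Or.inr ⟨?_, ?_, ?_⟩
        · rw [pr1_sum]
          apply Finset.sum_eq_zero
          intro j hj
          rw [Finset.mem_Ico] at hj
          rw [hVgt j (hge j hj.1), pr1_glue3]
        · rw [pr2_sum]
          have h2 : ∑ j ∈ Finset.Ico (m + K2 (i+1)) (m + K2 (i+1+1)), pr2 d₁ d₂ (V j)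
              = ∑ j ∈ Finset.Ico (K2 (i+1)) (K2 (i+1+1)), v₂ j := by
            rw [Finset.sum_Ico_eq_sum_range, Finset.sum_Ico_eq_sum_range]
            have hd : m + K2 (i+1+1) - (m + K2 (i+1)) = K2 (i+1+1) - K2 (i+1) := by omega
            rw [hd]
            apply Finset.sum_congr rfl
            intro j hj
            rw [hVgt (m + K2 (i+1) + j) (by have := hK2pos (i+1) (by omega); omega),
              pr2_glue3]
            have harg : m + K2 (i+1) + j - m = K2 (i+1) + j := by omega
            rw [harg]
          rw [h2]
          exact hK2C (i+1)
        · rw [prc_sum]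
          apply Finset.sum_eq_zero
          intro j hj
          rw [Finset.mem_Ico] at hj
          rw [hVgt j (hge j hj.1), prc_glue3]

end SPBAc

namespace SPBAc

lemma strong_subset {Sig : Type} {d₁ d₂ : ℕ} (A₁ : PBA Sig d₁) (A₂ : PBA Sig d₂) (α : ℕ → Sig)
    (h : α ∈ (catPBA A₁ A₂).StrongLang) : α ∈ CatLang A₁.FinLang A₂.StrongLang := by
  classical
  obtain ⟨P, V, ⟨hP0, hPΔ⟩, K, hK0, hKmono, hKF, hKC⟩ := h
  have hKpos : ∀ i, 1 ≤ i → 1 ≤ K i := by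
    intro i hi
    have := hKmono (show 0 < i by omega)
    omega
  have hKF' : ∀ i, 1 ≤ i → P (K i) ∈ (catPBA A₁ A₂).F :=
    fun i hi => (hKF (K i) (hKpos i hi)).mpr ⟨i, hi, rfl⟩
  have hex : ∃ n, ∃ q, P n = Sum.inr q := by
    obtain ⟨q, hqF, hq⟩ := hKF' 1 le_rfl
    exact ⟨K 1, q, hq.symm⟩
  set M := Nat.find hex with hM
  obtain ⟨qM, hqM⟩ : ∃ q, P M = Sum.inr q := Nat.find_spec hex
  have hMpos : 1 ≤ M := by
    rcases Nat.eq_zero_or_pos M with h0 | h1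
    · rw [h0, hP0] at hqM
      exact absurd hqM (by simp [catPBA])
    · exact h1
  set m := M - 1 with hm
  have hMm : M = m + 1 := by omega
  have hlow : ∀ n, n ≤ m → ∀ q, P n ≠ Sum.inr q := by
    intro n hn q hq
    exact Nat.find_min hex (show n < M by omega) ⟨q, hq⟩
  have hstep : ∀ n q, P n = Sum.inr q → ∃ q', P (n+1) = Sum.inr q' := by
    intro n q hq
    rcases hPΔ n with ⟨q₁, a, v, q', hmem, ht⟩ | ⟨q₁, a, v, q', hF1, hmem, ht⟩ |
      ⟨q₁, a, v, q', hmem, ht⟩ <;>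
      obtain ⟨e1, e2, e3, e4⟩ := And.imp id (fun h => And.imp id Prod.mk.inj (Prod.mk.inj h)) (Prod.mk.inj ht)
    · rw [hq] at e1; exact absurd e1 (by simp)
    · rw [hq] at e1; exact absurd e1 (by simp)
    · exact ⟨q', e4⟩
  have hhigh : ∀ n, m + 1 ≤ n → ∃ q, P n = Sum.inr q := by
    intro n hn
    induction n, hn using Nat.le_induction with
    | base => exact ⟨qM, by rw [← hMm]; exact hqM⟩
    | succ n hn ih =>
      obtain ⟨q, hq⟩ := ih
      exact hstep n q hq
  have hΔ1 : ∀ n, n < m → ∃ q q', P n = Sum.inl q ∧ P (n+1) = Sum.inl q' ∧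
      (q, α n, pr1 d₁ d₂ (V n), q') ∈ A₁.Δ ∧ pr2 d₁ d₂ (V n) = 0 ∧ prc d₁ d₂ (V n) = 0 := by
    intro n hn
    rcases hPΔ n with ⟨q₁, a, v, q', hmem, ht⟩ | ⟨q₁, a, v, q', hF1, hmem, ht⟩ |
      ⟨q₁, a, v, q', hmem, ht⟩ <;>
      obtain ⟨e1, e2, e3, e4⟩ := And.imp id (fun h => And.imp id Prod.mk.inj (Prod.mk.inj h)) (Prod.mk.inj ht)
    · refine ⟨q₁, q', e1, e4, ?_, ?_, ?_⟩
      · rw [e3, pr1_glue3, e2]; exact hmem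
      · rw [e3, pr2_glue3]
      · rw [e3, prc_glue3]
    · exact absurd e4 (hlow (n+1) (by omega) q')
    · exact absurd e1 (hlow n (by omega) q₁)
  have hjump : ∃ q q', P m = Sum.inl q ∧ P (m+1) = Sum.inr q' ∧ q ∈ A₁.F ∧
      (A₂.q0, α m, pr2 d₁ d₂ (V m), q') ∈ A₂.Δ ∧
      pr1 d₁ d₂ (V m) = 0 ∧ prc d₁ d₂ (V m) = 1 := by
    rcases hPΔ m with ⟨q₁, a, v, q', hmem, ht⟩ | ⟨q₁, a, v, q', hF1, hmem, ht⟩ |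
      ⟨q₁, a, v, q', hmem, ht⟩ <;>
      obtain ⟨e1, e2, e3, e4⟩ := And.imp id (fun h => And.imp id Prod.mk.inj (Prod.mk.inj h)) (Prod.mk.inj ht)
    · obtain ⟨q, hq⟩ := hhigh (m+1) le_rfl
      rw [hq] at e4
      exact absurd e4 (by simp)
    · refine ⟨q₁, q', e1, e4, hF1, ?_, ?_, ?_⟩
      · rw [e3, pr2_glue3, e2]; exact hmem
      · rw [e3, pr1_glue3]
      · rw [e3, prc_glue3]
    · exact absurd e1 (hlow m le_rfl q₁)
  have hΔ2 : ∀ n, m < n → ∃ q q', P n = Sum.inr q ∧ P (n+1) = Sum.inr q' ∧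
      (q, α n, pr2 d₁ d₂ (V n), q') ∈ A₂.Δ ∧ pr1 d₁ d₂ (V n) = 0 ∧ prc d₁ d₂ (V n) = 0 := by
    intro n hn
    rcases hPΔ n with ⟨q₁, a, v, q', hmem, ht⟩ | ⟨q₁, a, v, q', hF1, hmem, ht⟩ |
      ⟨q₁, a, v, q', hmem, ht⟩ <;>
      obtain ⟨e1, e2, e3, e4⟩ := And.imp id (fun h => And.imp id Prod.mk.inj (Prod.mk.inj h)) (Prod.mk.inj ht)
    · obtain ⟨q, hq⟩ := hhigh n (by omega)
      rw [hq] at e1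
      exact absurd e1 (by simp)
    · obtain ⟨q, hq⟩ := hhigh n (by omega)
      rw [hq] at e1
      exact absurd e1 (by simp)
    · refine ⟨q₁, q', e1, e4, ?_, ?_, ?_⟩
      · rw [e3, pr2_glue3, e2]; exact hmem
      · rw [e3, pr1_glue3]
      · rw [e3, prc_glue3]
  obtain ⟨qj, qj', hjl, hjr, hjF, hjΔ, hjpr1, hjprc⟩ := hjump
  set p₁ : ℕ → A₁.Q := fun n => Sum.elim id (fun _ => A₁.q0) (P n) with hp₁d
  set p₂ : ℕ → A₂.Q :=
    fun n => if n = 0 then A₂.q0 else Sum.elim (fun _ => A₂.q0) id (P (m + n)) with hp₂d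
  have hp₁ : ∀ n q, P n = Sum.inl q → p₁ n = q := by
    intro n q hq; simp [hp₁d, hq]
  have hp₂ : ∀ n q, 1 ≤ n → P (m + n) = Sum.inr q → p₂ n = q := by
    intro n q hn hq; simp [hp₂d, hq, show n ≠ 0 by omega]
  have hPn : ∀ n, 1 ≤ n → P (m + n) = Sum.inr (p₂ n) := by
    intro n hn
    obtain ⟨q, hq⟩ := hhigh (m + n) (by omega)
    rw [hq, hp₂ n q hn hq]
  have hKhigh : ∀ i, 1 ≤ i → m + 1 ≤ K i := by
    intro i hi
    by_contra hlt
    obtain ⟨q, hqF, hq⟩ := hKF' i hi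
    exact hlow (K i) (by omega) q hq.symm
  -- analyse the first segment
  have hKC0 := hKC 0
  rw [hK0] at hKC0
  have hm_lt : m < K (0+1) := by have := hKhigh (0+1) (by omega); omega
  have hprc1 : prc d₁ d₂ (∑ j ∈ Finset.Ico 0 (K (0+1)), V j) = 1 := by
    rw [prc_sum]
    have hterm : ∀ j ∈ Finset.Ico 0 (K (0+1)), prc d₁ d₂ (V j) = if j = m then 1 else 0 := by
      intro j _
      rcases lt_trichotomy j m with hj | hj | hj
      · obtain ⟨_, _, _, _, _, _, hc⟩ := hΔ1 j hj
        rw [hc, if_neg (Nat.ne_of_lt hj)]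
      · rw [hj, hjprc, if_pos rfl]
      · obtain ⟨_, _, _, _, _, _, hc⟩ := hΔ2 j hj
        rw [hc, if_neg (Nat.ne_of_gt hj)]
    rw [Finset.sum_congr rfl hterm, Finset.sum_ite_eq' _ m (fun _ => 1),
      if_pos (Finset.mem_Ico.mpr ⟨Nat.zero_le m, hm_lt⟩)]
  have hC0 : pr1 d₁ d₂ (∑ j ∈ Finset.Ico 0 (K (0+1)), V j) ∈ A₁.C ∧
      pr2 d₁ d₂ (∑ j ∈ Finset.Ico 0 (K (0+1)), V j) ∈ A₂.C := by
    rcases hKC0 with h | h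
    · exact ⟨h.1, h.2.1⟩
    · exact absurd hprc1 (by rw [h.2.2]; omega)
  obtain ⟨hC1, hC2⟩ := hC0
  rw [pr1_sum] at hC1
  rw [pr2_sum] at hC2
  have hlowsum1 : ∑ j ∈ Finset.Ico 0 (K (0+1)), pr1 d₁ d₂ (V j)
      = ∑ j ∈ Finset.range m, pr1 d₁ d₂ (V j) := by
    rw [← Finset.sum_Ico_consecutive _ (Nat.zero_le m) hm_lt.le, Finset.range_eq_Ico]
    have h2 : ∑ j ∈ Finset.Ico m (K (0+1)), pr1 d₁ d₂ (V j) = 0 := by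
      apply Finset.sum_eq_zero
      intro j hj
      rw [Finset.mem_Ico] at hj
      rcases Nat.eq_or_lt_of_le hj.1 with he | hl
      · rw [← he]; exact hjpr1
      · obtain ⟨_, _, _, _, _, hpr, _⟩ := hΔ2 j hl
        exact hpr
    rw [h2, add_zero]
  have hhighsum2 : ∑ j ∈ Finset.Ico 0 (K (0+1)), pr2 d₁ d₂ (V j)
      = ∑ j ∈ Finset.Ico m (K (0+1)), pr2 d₁ d₂ (V j) := by
    rw [← Finset.sum_Ico_consecutive _ (Nat.zero_le m) hm_lt.le]
    have h1 : ∑ j ∈ Finset.Ico 0 m, pr2 d₁ d₂ (V j) = 0 := by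
      apply Finset.sum_eq_zero
      intro j hj
      rw [Finset.mem_Ico] at hj
      obtain ⟨_, _, _, _, _, hpr, _⟩ := hΔ1 j hj.2
      exact hpr
    rw [h1, zero_add]
  set u : List Sig := (List.range m).map α with hu
  have hul : u.length = m := by simp [hu]
  have huget : ∀ i : Fin u.length, u.get i = α i := by
    intro i
    simp [hu]
  refine ⟨u, ?_, fun n => α (m + n), ?_, ?_, ?_⟩
  · -- u ∈ A₁.FinLang
    refine ⟨p₁, fun n => pr1 d₁ d₂ (V n), ?_, ?_, ?_, ?_⟩
    · exact hp₁ 0 A₁.q0 hP0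
    · intro i
      have hi : (i : ℕ) < m := by have := i.2; omega
      obtain ⟨q, q', e1, e2, hmem, _, _⟩ := hΔ1 i hi
      rw [hp₁ _ _ e1, hp₁ _ _ e2, huget i]
      exact hmem
    · rw [hul, hp₁ m qj hjl]
      exact hjF
    · rw [hul, ← hlowsum1]
      exact hC1
  · -- β ∈ A₂.StrongLang
    refine ⟨p₂, fun n => pr2 d₁ d₂ (V (m + n)), ⟨by simp [hp₂d], ?_⟩, ?_⟩
    · intro n
      cases n with
      | zero =>
        have h1 : p₂ 0 = A₂.q0 := by simp [hp₂d]
        have h2 : p₂ (0+1) = qj' := hp₂ 1 qj' le_rfl (by rw [hjr])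
        rw [h1, h2]
        simpa using hjΔ
      | succ n =>
        obtain ⟨q, q', e1, e2, hmem, _, _⟩ := hΔ2 (m + (n+1)) (by omega)
        have h1 : p₂ (n+1) = q := hp₂ (n+1) q (by omega) e1
        have h2 : p₂ (n+1+1) = q' := by
          apply hp₂ (n+1+1) q' (by omega)
          rw [show m + (n+1+1) = m + (n+1) + 1 by omega]
          exact e2
        rw [h1, h2]
        exact hmem
    · set k2 : ℕ → ℕ := fun i => if i = 0 then 0 else K i - m with hk2d
      have hk20 : k2 0 = 0 := rfl
      have hk2s : ∀ i : ℕ, k2 (i+1) = K (i+1) - m := fun i => by simp [hk2d]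
      refine ⟨k2, hk20, ?_, ?_, ?_⟩
      · apply strictMono_nat_of_lt_succ
        intro i
        cases i with
        | zero =>
          rw [hk20, hk2s 0]
          have := hKhigh (0+1) (by omega)
          omega
        | succ j =>
          rw [hk2s j, hk2s (j+1)]
          have h1 := hKmono (show j+1 < j+1+1 by omega)
          have h2 := hKhigh (j+1) (by omega)
          omega
      · intro n hn
        have hPmn := hPn n hn
        constructor
        · intro hmem
          have hF : P (m + n) ∈ (catPBA A₁ A₂).F := ⟨p₂ n, hmem, hPmn.symm⟩
          obtain ⟨i, hi1, hi2⟩ := (hKF (m + n) (by omega)).mp hF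
          obtain ⟨j, rfl⟩ := Nat.exists_eq_add_of_le' hi1
          refine ⟨j + 1, by omega, ?_⟩
          rw [hk2s j]
          omega
        · rintro ⟨i, hi1, hi2⟩
          obtain ⟨j, rfl⟩ := Nat.exists_eq_add_of_le' hi1
          rw [hk2s j] at hi2
          have hKj := hKhigh (j+1) (by omega)
          have hF : P (m + n) ∈ (catPBA A₁ A₂).F :=
            (hKF (m + n) (by omega)).mpr ⟨j + 1, by omega, by omega⟩
          obtain ⟨q, hqF, hq⟩ := hF
          rw [hPmn] at hq
          exact Sum.inr_injective hq ▸ hqF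
      · intro i
        cases i with
        | zero =>
          rw [hk20, hk2s 0]
          have e1 : ∑ j ∈ Finset.Ico 0 (K (0+1) - m), pr2 d₁ d₂ (V (m + j))
              = ∑ j ∈ Finset.Ico m (K (0+1)), pr2 d₁ d₂ (V j) := by
            rw [Finset.sum_Ico_eq_sum_range (f := fun j => pr2 d₁ d₂ (V j)),
              ← Finset.range_eq_Ico]
          rw [e1, ← hhighsum2]
          exact hC2
        | succ i =>
          rw [hk2s i, hk2s (i+1)]
          have hKi := hKhigh (i+1) (by omega)
          have hKi2 := hKhigh (i+1+1) (by omega)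
          have hKlt := hKmono (show i+1 < i+1+1 by omega)
          have e1 : ∑ j ∈ Finset.Ico (K (i+1) - m) (K (i+1+1) - m), pr2 d₁ d₂ (V (m + j))
              = ∑ j ∈ Finset.Ico (K (i+1)) (K (i+1+1)), pr2 d₁ d₂ (V j) := by
            rw [Finset.sum_Ico_eq_sum_range, Finset.sum_Ico_eq_sum_range]
            have hd : K (i+1+1) - m - (K (i+1) - m) = K (i+1+1) - K (i+1) := by omega
            rw [hd]
            apply Finset.sum_congr rfl
            intro j hj
            have harg : m + (K (i+1) - m + j) = K (i+1) + j := by omega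
            rw [harg]
          rw [e1]
          have hseg := hKC (i+1)
          rcases hseg with hseg | hseg
          · have := hseg.2.1
            rwa [pr2_sum] at this
          · have := hseg.2.1
            rwa [pr2_sum] at this
  · -- prefix agreement
    intro i
    exact (huget i).symm
  · intro n
    rw [hul]
end SPBAc

/-- If `L₁` is Parikh-recognizable and `L₂` is SPBA-recognizable, then
the concatenation `L₁L₂` is SPBA-recognizable. -/
theorem SPBA_closed_cat {Sig : Type} (L₁ : Set (List Sig)) (L₂ : Set (ℕ → Sig))
    (h₁ : ParikhRec L₁) (h₂ : SPBARec L₂) : SPBARec (CatLang L₁ L₂) := by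
  obtain ⟨d₁, A₁, hC₁, hL₁⟩ := h₁
  obtain ⟨d₂, A₂, hC₂, hL₂⟩ := h₂
  refine ⟨d₁ + d₂ + 1, SPBAc.catPBA A₁ A₂, SPBAc.isSemilinear_catC hC₁ hC₂, ?_⟩
  ext α
  constructor
  · intro h
    rw [← hL₁, ← hL₂]
    exact SPBAc.strong_subset A₁ A₂ α h
  · intro h
    apply SPBAc.cat_subset A₁ A₂ α
    rw [hL₁, hL₂]
    exact h
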